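/- arXiv:1001.2835 — 7 statements merged into one kernel-verified Lean document; each statement's English description precedes it below -/
import Mathlib

section
/- For all positive integers n, ∑_{k=1}^{n} C(n,k) (-1)^k / k^2 = -(1/2)(H_n^{(2)} + (H_n)^2), where H_n^{(m)} = ∑_{k=1}^n 1/k^m. -/
open Finset

/-- The generalized harmonic number `H_n^{(m)} = ∑_{k=1}^n 1/k^m` as a real number. -/
noncomputable def genHarmonic (m n : ℕ) : ℝ := ∑ k ∈ Finset.range n, (1 : ℝ) / ((k + 1 : ℝ)) ^ m

lemma icc_to_range (n : ℕ) (f : ℕ → ℝ) :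
    ∑ k ∈ Finset.Icc 1 n, f k = ∑ i ∈ Finset.range n, f (i + 1) := by
  rw [← Finset.Ico_add_one_right_eq_Icc, Finset.sum_Ico_eq_sum_range]
  exact Finset.sum_congr rfl fun i _ => by rw [add_comm]

lemma alt_sum (n : ℕ) :
    ∑ j ∈ Finset.range (n + 1), (-1 : ℝ) ^ j * ((n + 1).choose (j + 1) : ℝ) = 1 := by
  have h := Int.alternating_sum_range_choose (n := n + 1)
  simp only [Nat.succ_ne_zero, if_false] at h
  have h' : ∑ i ∈ Finset.range (n + 2), (-1 : ℝ) ^ i * ((n + 1).choose i : ℝ) = 0 := by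
    exact_mod_cast h
  rw [Finset.sum_range_succ'] at h'
  simp only [pow_succ, pow_zero, one_mul, Nat.choose_zero_right, Nat.cast_one] at h'
  -- h' : ∑ i ∈ range (n+1), (-1)^i * (-1) * C(n+1, i+1) + 1 = 0
  have : ∑ j ∈ Finset.range (n + 1), (-1 : ℝ) ^ j * ((n + 1).choose (j + 1) : ℝ) =
      -(∑ i ∈ Finset.range (n + 1), (-1 : ℝ) ^ i * (-1) * ((n + 1).choose (i + 1) : ℝ)) := by
    rw [← Finset.sum_neg_distrib]
    exact Finset.sum_congr rfl fun i _ => by ring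
  rw [this]; linarith

lemma lemB (n : ℕ) :
    ∑ j ∈ Finset.range (n + 1), (n.choose j : ℝ) * (-1) ^ j / (j + 1 : ℝ) = 1 / (n + 1 : ℝ) := by
  have key : ∀ j : ℕ, (n.choose j : ℝ) * (-1) ^ j / (j + 1 : ℝ) =
      (-1) ^ j * (((n + 1).choose (j + 1) : ℝ)) / (n + 1 : ℝ) := by
    intro j
    have h := Nat.add_one_mul_choose_eq n j
    have h' : ((n + 1 : ℕ) : ℝ) * (n.choose j : ℝ) = ((n + 1).choose (j + 1) : ℝ) * ((j + 1 : ℕ) : ℝ) := by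
      exact_mod_cast congrArg (Nat.cast : ℕ → ℝ) h
    push_cast at h'
    have hj : (j : ℝ) + 1 ≠ 0 := by positivity
    have hn : (n : ℝ) + 1 ≠ 0 := by positivity
    field_simp
    linear_combination h'
  rw [Finset.sum_congr rfl fun j _ => key j, ← Finset.sum_div, alt_sum]

lemma lemA (n : ℕ) :
    ∑ k ∈ Finset.range n, (n.choose (k + 1) : ℝ) * (-1) ^ (k + 1) / (k + 1 : ℝ) =
      -(genHarmonic 1 n) := by
  induction n with
  | zero => simp [genHarmonic]
  | succ n ih =>
    have pascal : ∀ k : ℕ, ((n + 1).choose (k + 1) : ℝ) = (n.choose k : ℝ) + (n.choose (k + 1) : ℝ) := by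
      intro k; exact_mod_cast congrArg (Nat.cast : ℕ → ℝ) (Nat.choose_succ_succ n k)
    have split : ∑ k ∈ Finset.range (n + 1), ((n + 1).choose (k + 1) : ℝ) * (-1) ^ (k + 1) / (k + 1 : ℝ) =
        (∑ k ∈ Finset.range (n + 1), (n.choose (k + 1) : ℝ) * (-1) ^ (k + 1) / (k + 1 : ℝ)) +
        (∑ k ∈ Finset.range (n + 1), (n.choose k : ℝ) * (-1) ^ (k + 1) / (k + 1 : ℝ)) := by
      rw [← Finset.sum_add_distrib]
      exact Finset.sum_congr rfl fun k _ => by rw [pascal k]; ring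
    have first : ∑ k ∈ Finset.range (n + 1), (n.choose (k + 1) : ℝ) * (-1) ^ (k + 1) / (k + 1 : ℝ) =
        ∑ k ∈ Finset.range n, (n.choose (k + 1) : ℝ) * (-1) ^ (k + 1) / (k + 1 : ℝ) := by
      rw [Finset.sum_range_succ, Nat.choose_succ_self]
      simp
    have second : ∑ k ∈ Finset.range (n + 1), (n.choose k : ℝ) * (-1) ^ (k + 1) / (k + 1 : ℝ) =
        -(1 / (n + 1 : ℝ)) := by
      rw [← lemB n, ← Finset.sum_neg_distrib]
      exact Finset.sum_congr rfl fun k _ => by ring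
    rw [split, first, second, ih]
    simp [genHarmonic, Finset.sum_range_succ]
    ring

lemma lemC (n : ℕ) :
    ∑ j ∈ Finset.range (n + 1), (n.choose j : ℝ) * (-1) ^ j / ((j + 1 : ℝ)) ^ 2 =
      genHarmonic 1 (n + 1) / (n + 1 : ℝ) := by
  have key : ∀ j : ℕ, (n.choose j : ℝ) * (-1) ^ j / ((j + 1 : ℝ)) ^ 2 =
      (((n + 1).choose (j + 1) : ℝ) * (-1) ^ (j + 1) / (j + 1 : ℝ)) * (-(1 / (n + 1 : ℝ))) := by
    intro j
    have h := Nat.add_one_mul_choose_eq n j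
    have h' : ((n : ℝ) + 1) * (n.choose j : ℝ) = ((n + 1).choose (j + 1) : ℝ) * ((j : ℝ) + 1) := by
      exact_mod_cast congrArg (Nat.cast : ℕ → ℝ) h
    have hj : (j : ℝ) + 1 ≠ 0 := by positivity
    have hn : (n : ℝ) + 1 ≠ 0 := by positivity
    field_simp
    linear_combination ((-1 : ℝ) ^ j) * h'
  rw [Finset.sum_congr rfl fun j _ => key j, ← Finset.sum_mul, lemA (n + 1)]
  field_simp

theorem alternating_binomial_sum_sq (n : ℕ) (hn : 0 < n) :
    ∑ k ∈ Finset.Icc 1 n, (n.choose k : ℝ) * (-1) ^ k / (k : ℝ) ^ 2 =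
      -(1 / 2) * (genHarmonic 2 n + (genHarmonic 1 n) ^ 2) := by
  rw [icc_to_range]
  clear hn
  induction n with
  | zero => simp [genHarmonic]
  | succ n ih =>
    have pascal : ∀ k : ℕ, ((n + 1).choose (k + 1) : ℝ) = (n.choose k : ℝ) + (n.choose (k + 1) : ℝ) := by
      intro k; exact_mod_cast congrArg (Nat.cast : ℕ → ℝ) (Nat.choose_succ_succ n k)
    have split : ∑ k ∈ Finset.range (n + 1), ((n + 1).choose (k + 1) : ℝ) * (-1) ^ (k + 1) / ((k + 1 : ℕ) : ℝ) ^ 2 =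
        (∑ k ∈ Finset.range (n + 1), (n.choose (k + 1) : ℝ) * (-1) ^ (k + 1) / ((k + 1 : ℕ) : ℝ) ^ 2) +
        (∑ k ∈ Finset.range (n + 1), (n.choose k : ℝ) * (-1) ^ (k + 1) / ((k + 1 : ℕ) : ℝ) ^ 2) := by
      rw [← Finset.sum_add_distrib]
      exact Finset.sum_congr rfl fun k _ => by rw [pascal k]; ring
    have first : ∑ k ∈ Finset.range (n + 1), (n.choose (k + 1) : ℝ) * (-1) ^ (k + 1) / ((k + 1 : ℕ) : ℝ) ^ 2 =
        ∑ k ∈ Finset.range n, (n.choose (k + 1) : ℝ) * (-1) ^ (k + 1) / ((k + 1 : ℕ) : ℝ) ^ 2 := by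
      rw [Finset.sum_range_succ, Nat.choose_succ_self]
      simp
    have second : ∑ k ∈ Finset.range (n + 1), (n.choose k : ℝ) * (-1) ^ (k + 1) / ((k + 1 : ℕ) : ℝ) ^ 2 =
        -(genHarmonic 1 (n + 1) / (n + 1 : ℝ)) := by
      rw [← lemC n, ← Finset.sum_neg_distrib]
      refine Finset.sum_congr rfl fun k _ => ?_
      push_cast
      ring
    rw [split, first, second, ih]
    have hn : (n : ℝ) + 1 ≠ 0 := by positivity
    simp only [genHarmonic, Finset.sum_range_succ]
    push_cast
    field_simp
    ring
end

section
/- For all positive integers n, ∑_{k=1}^{n} C(n,k) (-1)^{k+1} / k^3 = (1/6)(H_n)^3 + (1/2) H_n H_n^{(2)} + (1/3) H_n^{(3)}. -/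
noncomputable def Saux (m n : ℕ) : ℝ :=
  ∑ k ∈ Finset.Icc 1 n, (n.choose k : ℝ) * (-1) ^ (k + 1) / (k : ℝ) ^ m

lemma Saux_rec (m n : ℕ) :
    Saux (m+1) (n+1) = Saux (m+1) n + (1/((n:ℝ)+1)) * Saux m (n+1) := by
  have h1 : Saux (m+1) n
      = ∑ k ∈ Finset.Icc 1 (n+1), (n.choose k : ℝ) * (-1) ^ (k+1) / (k : ℝ) ^ (m+1) := by
    rw [Saux, Finset.sum_Icc_succ_top (by omega)]
    simp [Nat.choose_succ_self]
  rw [Saux, h1, Saux, Finset.mul_sum, ← Finset.sum_add_distrib]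
  apply Finset.sum_congr rfl
  intro k hk
  obtain ⟨hk1, hk2⟩ := Finset.mem_Icc.mp hk
  obtain ⟨j, rfl⟩ : ∃ j, k = j + 1 := ⟨k - 1, by omega⟩
  have hA : ((n+1).choose (j+1) : ℝ) = (n.choose (j+1) : ℝ) + (n.choose j : ℝ) := by
    rw [Nat.choose_succ_succ']; push_cast; ring
  have hC : ((n:ℝ)+1) * (n.choose j : ℝ) = ((n+1).choose (j+1) : ℝ) * ((j:ℝ)+1) := by
    have := Nat.add_one_mul_choose_eq n j
    exact_mod_cast congrArg (Nat.cast : ℕ → ℝ) this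
  have hkne : ((j:ℝ)+1) ≠ 0 := by positivity
  have hnne : ((n:ℝ)+1) ≠ 0 := by positivity
  push_cast at hA hC ⊢
  have hB : ((n.choose (j+1)) : ℝ)
      = ((n+1).choose (j+1) : ℝ) - ((n+1).choose (j+1) : ℝ) * ((j:ℝ)+1) / ((n:ℝ)+1) := by
    field_simp
    linear_combination (-((n:ℝ)+1)) * hA - hC
  push_cast at hB
  rw [hB, pow_succ]
  field_simp
  ring

lemma Saux_zero (n : ℕ) : Saux 0 (n+1) = 1 := by
  have h := Int.alternating_sum_range_choose_of_ne (n := n+1) (by omega)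
  have h' : (∑ i ∈ Finset.range (n+2), (-1:ℝ)^i * ((n+1).choose i)) = 0 := by
    exact_mod_cast congrArg (Int.cast : ℤ → ℝ) h
  rw [Saux]
  have : Finset.Icc 1 (n+1) = Finset.Ico 1 (n+2) := by rfl
  rw [this]
  rw [Finset.range_eq_Ico, Finset.sum_eq_sum_Ico_succ_bot (by omega)] at h'
  simp only [pow_zero, Nat.choose_zero_right, Nat.cast_one, mul_one] at h'
  have : ∑ k ∈ Finset.Ico 1 (n+2), ((n+1).choose k : ℝ) * (-1)^(k+1) / (k:ℝ)^0
      = -∑ i ∈ Finset.Ico 1 (n+2), (-1:ℝ)^i * ((n+1).choose i) := by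
    rw [← Finset.sum_neg_distrib]
    apply Finset.sum_congr rfl
    intro k _
    rw [pow_zero, pow_succ]
    ring
  rw [this]
  linarith [h']

lemma genHarmonic_succ (m n : ℕ) :
    genHarmonic m (n+1) = genHarmonic m n + 1 / ((n:ℝ)+1)^m := by
  rw [genHarmonic, Finset.sum_range_succ, genHarmonic]

lemma Saux_one (n : ℕ) : Saux 1 n = genHarmonic 1 n := by
  induction n with
  | zero => simp [Saux, genHarmonic]
  | succ n ih =>
    have := Saux_rec 0 n
    rw [Saux_zero] at this
    rw [this, ih, genHarmonic_succ]
    ring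

lemma Saux_two (n : ℕ) :
    Saux 2 n = (1/2) * (genHarmonic 1 n)^2 + (1/2) * genHarmonic 2 n := by
  induction n with
  | zero => simp [Saux, genHarmonic]
  | succ n ih =>
    have := Saux_rec 1 n
    rw [Saux_one] at this
    rw [this, ih, genHarmonic_succ, genHarmonic_succ]
    have hne : ((n:ℝ)+1) ≠ 0 := by positivity
    field_simp
    ring

lemma Saux_three (n : ℕ) :
    Saux 3 n = (1/6) * (genHarmonic 1 n)^3 + (1/2) * genHarmonic 1 n * genHarmonic 2 n
      + (1/3) * genHarmonic 3 n := by
  induction n with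
  | zero => simp [Saux, genHarmonic]
  | succ n ih =>
    have := Saux_rec 2 n
    rw [Saux_two] at this
    rw [this, ih, genHarmonic_succ, genHarmonic_succ, genHarmonic_succ]
    have hne : ((n:ℝ)+1) ≠ 0 := by positivity
    field_simp
    ring

theorem alternating_binomial_sum_cube (n : ℕ) (hn : 0 < n) :
    ∑ k ∈ Finset.Icc 1 n, (n.choose k : ℝ) * (-1) ^ (k + 1) / (k : ℝ) ^ 3 =
      (1 / 6) * (genHarmonic 1 n) ^ 3 + (1 / 2) * genHarmonic 1 n * genHarmonic 2 n
        + (1 / 3) * genHarmonic 3 n := by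
  exact Saux_three n
end

section
/- For all nonnegative integers n and all positive real x, ∑_{k=0}^n C(n,k) (-1)^k / (k+x)^2 = (n! Γ(x)/Γ(n+1+x)) · ∑_{j=0}^{n} 1/(j+x). -/
open Finset

lemma gamma_prod (n : ℕ) (x : ℝ) (hx : 0 < x) :
    Real.Gamma ((n : ℝ) + 1 + x) = (∏ j ∈ range (n + 1), ((j : ℝ) + x)) * Real.Gamma x := by
  induction n with
  | zero =>
      rw [show ((0:ℕ):ℝ) + 1 + x = x + 1 by push_cast; ring, Real.Gamma_add_one hx.ne',
        prod_range_one]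
      push_cast; ring
  | succ n ih =>
      have h1 : ((n+1 : ℕ) : ℝ) + 1 + x = ((n:ℝ)+1+x) + 1 := by push_cast; ring
      rw [h1, Real.Gamma_add_one (by positivity), ih,
        prod_range_succ (fun j => ((j:ℝ)+x)) (n+1)]
      push_cast; ring

lemma coppo_aux (n : ℕ) : ∀ x : ℝ, 0 < x →
    ∑ k ∈ range (n + 1), (n.choose k : ℝ) * (-1) ^ k / ((k : ℝ) + x) ^ 2 =
      (n.factorial : ℝ) / (∏ j ∈ range (n + 1), ((j : ℝ) + x)) *
        ∑ j ∈ range (n + 1), 1 / ((j : ℝ) + x) := by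
  induction n with
  | zero =>
      intro x hx
      rw [sum_range_one, sum_range_one, prod_range_one]
      push_cast
      rw [sq]
      field_simp
      simp
  | succ n ih =>
      intro x hx
      have hx1 : (0:ℝ) < x + 1 := by positivity
      have hnx : (0:ℝ) < (n:ℝ) + 1 + x := by positivity
      have key : ∑ k ∈ range (n + 2), ((n+1).choose k : ℝ) * (-1) ^ k / ((k : ℝ) + x) ^ 2
          = (∑ k ∈ range (n + 1), (n.choose k : ℝ) * (-1) ^ k / ((k : ℝ) + x) ^ 2)
            - ∑ k ∈ range (n + 1), (n.choose k : ℝ) * (-1) ^ k / ((k : ℝ) + (x+1)) ^ 2 := by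
        rw [Finset.sum_range_succ' (fun k => ((n+1).choose k : ℝ) * (-1) ^ k / ((k : ℝ) + x) ^ 2)]
        rw [Finset.sum_range_succ' (fun k => (n.choose k : ℝ) * (-1) ^ k / ((k : ℝ) + x) ^ 2)]
        have e1 : ∀ k ∈ range (n+1),
            (((n+1).choose (k+1) : ℝ)) * (-1) ^ (k+1) / (((k+1 : ℕ) : ℝ) + x) ^ 2
            = ((n.choose (k+1) : ℝ)) * (-1) ^ (k+1) / (((k+1 : ℕ) : ℝ) + x) ^ 2
              + (-(((n.choose k : ℝ)) * (-1) ^ k / (((k : ℝ) + (x+1)) ^ 2))) := by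
          intro k _
          rw [Nat.choose_succ_succ]
          push_cast
          rw [show ((k:ℝ)) + 1 + x = (k:ℝ) + (x+1) by ring]
          ring
        rw [Finset.sum_congr rfl e1, Finset.sum_add_distrib]
        have e2 : ∑ k ∈ range (n+1),
            ((n.choose (k+1) : ℝ)) * (-1) ^ (k+1) / (((k+1 : ℕ) : ℝ) + x) ^ 2
            = ∑ k ∈ range n,
              ((n.choose (k+1) : ℝ)) * (-1) ^ (k+1) / (((k+1 : ℕ) : ℝ) + x) ^ 2 := by
          rw [sum_range_succ]
          simp
        rw [e2]
        simp
        ring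
      show ∑ k ∈ range (n + 2), ((n+1).choose k : ℝ) * (-1) ^ k / ((k : ℝ) + x) ^ 2 = _
      rw [key, ih x hx, ih (x+1) hx1]
      have hP : (0:ℝ) < ∏ j ∈ range (n + 1), ((j : ℝ) + x) :=
        prod_pos fun j _ => by positivity
      have hQ : (∏ j ∈ range (n+1), ((j:ℝ)+(x+1))) * x
          = (∏ j ∈ range (n+1), ((j:ℝ)+x)) * ((n:ℝ)+1+x) := by
        have h1 := prod_range_succ' (fun j => ((j:ℝ)+x)) (n+1)
        rw [prod_range_succ] at h1
        have e : ∏ j ∈ range (n+1), ((j:ℝ)+(x+1))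
            = ∏ j ∈ range (n+1), (((j+1:ℕ):ℝ)+x) :=
          prod_congr rfl (by intro j _; push_cast; ring)
        rw [e]
        push_cast at h1 ⊢
        linear_combination -h1
      have hQ' : (∏ j ∈ range (n+1), ((j:ℝ)+(x+1)))
          = (∏ j ∈ range (n+1), ((j:ℝ)+x)) * ((n:ℝ)+1+x) / x := by
        rw [eq_div_iff hx.ne']; exact hQ
      have hG : ∑ j ∈ range (n+1), 1/((j:ℝ)+(x+1))
          = (∑ j ∈ range (n+1), 1/((j:ℝ)+x)) + 1/((n:ℝ)+1+x) - 1/x := by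
        have h1 := sum_range_succ' (fun j => 1/((j:ℝ)+x)) (n+1)
        rw [sum_range_succ] at h1
        have e : ∑ j ∈ range (n+1), 1/((j:ℝ)+(x+1))
            = ∑ j ∈ range (n+1), 1/(((j+1:ℕ):ℝ)+x) :=
          sum_congr rfl (by intro j _; push_cast; ring_nf)
        rw [e]
        push_cast at h1 ⊢
        linear_combination -h1
      rw [hQ', hG, prod_range_succ (fun j => ((j:ℝ)+x)) (n+1),
        sum_range_succ (fun j => 1/((j:ℝ)+x)) (n+1)]
      push_cast [Nat.factorial_succ]
      field_simp
      ring

theorem coppo_formula_one (n : ℕ) (x : ℝ) (hx : 0 < x) :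
    ∑ k ∈ Finset.range (n + 1), (n.choose k : ℝ) * (-1) ^ k / ((k : ℝ) + x) ^ 2 =
      (n.factorial : ℝ) * Real.Gamma x / Real.Gamma ((n : ℝ) + 1 + x) *
        ∑ j ∈ Finset.range (n + 1), 1 / ((j : ℝ) + x) := by
  rw [gamma_prod n x hx, coppo_aux n x hx]
  have hΓ : Real.Gamma x ≠ 0 := (Real.Gamma_pos_of_pos hx).ne'
  have hP : (∏ j ∈ range (n + 1), ((j : ℝ) + x)) ≠ 0 :=
    (prod_pos fun j _ => by positivity).ne'
  field_simp
end

section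
/- For integers n ≥ 1 and r ≥ 0, the Stirling numbers of the first kind satisfy the recurrence (r+1)·s(n, r+2) = -∑_{k=0}^r s(n, r-k+1)·H_{n-1}^{(k+1)}. -/
/-- The signed Stirling numbers of the first kind, defined as the coefficients of the
falling factorial `x(x-1)⋯(x-n+1) = ∑_{k=0}^n s(n,k) x^k`. -/
noncomputable def stirlingFirst (n k : ℕ) : ℤ := (descPochhammer ℤ n).coeff k

lemma stirlingFirst_zero (n : ℕ) (hn : 1 ≤ n) : stirlingFirst n 0 = 0 := by
  unfold stirlingFirst
  rw [Polynomial.coeff_zero_eq_eval_zero]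
  exact descPochhammer_ne_zero_eval_zero ℤ (Nat.one_le_iff_ne_zero.mp hn)

lemma stirlingFirst_rec (n m : ℕ) :
    stirlingFirst (n + 1) (m + 1)
      = stirlingFirst n m - (n : ℤ) * stirlingFirst n (m + 1) := by
  unfold stirlingFirst
  rw [descPochhammer_succ_right, mul_sub, Polynomial.coeff_sub, Polynomial.coeff_mul_X]
  congr 1
  rw [← Polynomial.C_eq_natCast, Polynomial.coeff_mul_C]
  ring

lemma stirlingFirst_aux : ∀ n, 1 ≤ n → ∀ r : ℕ,
    ((r : ℝ) + 1) * (stirlingFirst n (r + 2) : ℝ) =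
      -∑ k ∈ Finset.range (r + 1),
        (stirlingFirst n (r - k + 1) : ℝ) * genHarmonic (k + 1) (n - 1) := by
  intro n hn
  induction n, hn using Nat.le_induction with
  | base =>
    intro r
    have h1 : ∀ m, stirlingFirst 1 (m + 2) = 0 := by
      intro m
      unfold stirlingFirst
      simp [descPochhammer, Polynomial.coeff_X]
    simp [h1, genHarmonic]
  | succ n hn IH =>
    obtain ⟨m, rfl⟩ : ∃ m, n = m + 1 := ⟨n - 1, by omega⟩
    intro r
    have hm1 : (m + 1 : ℕ) - 1 = m := rfl
    set a : ℕ → ℝ := fun j => (stirlingFirst (m + 1) j : ℝ) with ha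
    set c : ℝ := 1 / ((m : ℝ) + 1) with hc
    have hmne : ((m : ℝ) + 1) ≠ 0 := by positivity
    have key : ∀ j : ℕ, (stirlingFirst (m + 2) (j + 1) : ℝ)
        = a j - ((m : ℝ) + 1) * a (j + 1) := by
      intro j
      have := stirlingFirst_rec (m + 1) j
      rw [ha]
      push_cast [this]
      ring
    have hH : ∀ p : ℕ, genHarmonic p (m + 1) = genHarmonic p m + c ^ p := by
      intro p
      unfold genHarmonic
      rw [Finset.sum_range_succ, hc, one_div_pow]
    have ha0 : a 0 = 0 := by
      rw [ha]; simp [stirlingFirst_zero (m + 1) (by omega)]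
    have hcc : ∀ k : ℕ, ((m : ℝ) + 1) * c ^ (k + 1) = c ^ k := by
      intro k
      rw [pow_succ, hc]
      field_simp
    -- the four sums
    set S1 : ℝ := ∑ k ∈ Finset.range (r + 1), a (r - k) * genHarmonic (k + 1) m with hS1
    set S2 : ℝ := ∑ k ∈ Finset.range (r + 1), a (r - k + 1) * genHarmonic (k + 1) m with hS2
    set S3 : ℝ := ∑ k ∈ Finset.range (r + 1), a (r - k) * c ^ (k + 1) with hS3
    set S4 : ℝ := ∑ k ∈ Finset.range (r + 1), a (r - k + 1) * c ^ (k + 1) with hS4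
    -- fact from IH at r
    have F2 : ((r : ℝ) + 1) * a (r + 2) = -S2 := by
      have := IH r
      rw [hm1] at this
      exact this
    -- S1 = -r * a (r+1)
    have F1 : S1 = -(r : ℝ) * a (r + 1) := by
      rw [hS1]
      cases r with
      | zero => simp [ha0]
      | succ t =>
        rw [Finset.sum_range_succ]
        have hsub : (t + 1 : ℕ) - (t + 1) = 0 := by omega
        rw [hsub, ha0, zero_mul, add_zero]
        have hcongr : ∀ k ∈ Finset.range (t + 1),
            a (t + 1 - k) * genHarmonic (k + 1) m
              = a (t - k + 1) * genHarmonic (k + 1) m := by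
          intro k hk
          rw [Finset.mem_range] at hk
          congr 2
          omega
        rw [Finset.sum_congr rfl hcongr]
        have := IH t
        rw [hm1] at this
        have h2 : (∑ k ∈ Finset.range (t + 1),
            a (t - k + 1) * genHarmonic (k + 1) m) = -(((t : ℝ) + 1) * a (t + 2)) := by
          rw [← neg_eq_iff_eq_neg]
          exact this.symm
        rw [h2]
        push_cast
        ring_nf
    -- S3 - (m+1) * S4 = - a (r+1)
    have F3 : S3 - ((m : ℝ) + 1) * S4 = -a (r + 1) := by
      have hS4' : ((m : ℝ) + 1) * S4 = ∑ k ∈ Finset.range (r + 1), a (r - k + 1) * c ^ k := by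
        rw [hS4, Finset.mul_sum]
        refine Finset.sum_congr rfl fun k _ => ?_
        rw [← hcc k]; ring
      rw [hS4', Finset.sum_range_succ']
      have hcongr : ∀ k ∈ Finset.range r,
          a (r - (k + 1) + 1) * c ^ (k + 1) = a (r - k) * c ^ (k + 1) := by
        intro k hk
        rw [Finset.mem_range] at hk
        congr 2
        omega
      rw [Finset.sum_congr rfl hcongr]
      rw [hS3, Finset.sum_range_succ]
      have hsub : r - r = 0 := by omega
      rw [hsub, ha0, zero_mul, add_zero]
      simp
    -- expand the goal sum
    have expand : (∑ k ∈ Finset.range (r + 1),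
        (stirlingFirst (m + 1 + 1) (r - k + 1) : ℝ) * genHarmonic (k + 1) (m + 1 + 1 - 1))
          = S1 - ((m : ℝ) + 1) * S2 + S3 - ((m : ℝ) + 1) * S4 := by
      have step : ∀ k ∈ Finset.range (r + 1),
          (stirlingFirst (m + 1 + 1) (r - k + 1) : ℝ) * genHarmonic (k + 1) (m + 1 + 1 - 1)
            = a (r - k) * genHarmonic (k + 1) m + a (r - k) * c ^ (k + 1)
              - ((m : ℝ) + 1) * (a (r - k + 1) * genHarmonic (k + 1) m)
              - ((m : ℝ) + 1) * (a (r - k + 1) * c ^ (k + 1)) := by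
        intro k _
        have h1 : (m + 1 + 1 : ℕ) - 1 = m + 1 := rfl
        rw [h1, key (r - k), hH (k + 1)]
        ring
      rw [Finset.sum_congr rfl step]
      rw [hS1, hS2, hS3, hS4, Finset.mul_sum, Finset.mul_sum]
      rw [Finset.sum_sub_distrib, Finset.sum_sub_distrib, Finset.sum_add_distrib]
      ring
    have hgoalL : (stirlingFirst (m + 1 + 1) (r + 2) : ℝ)
        = a (r + 1) - ((m : ℝ) + 1) * a (r + 2) := key (r + 1)
    rw [hgoalL, expand, F1] at *
    nlinarith [F2, F3]

theorem stirlingFirst_recurrence (n r : ℕ) (hn : 1 ≤ n) :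
    ((r : ℝ) + 1) * (stirlingFirst n (r + 2) : ℝ) =
      -∑ k ∈ Finset.range (r + 1),
        (stirlingFirst n (r - k + 1) : ℝ) * genHarmonic (k + 1) (n - 1) := by
  exact stirlingFirst_aux n hn r
end

section
/- For every positive integer n, n · ∫_0^1 (1-t)^{n-1} log² t dt = H_n^{(2)} + (H_n)². -/
open Real Finset intervalIntegral MeasureTheory Set

lemma log_bound {t : ℝ} (ht : t ∈ Set.Ioc (0:ℝ) 1) :
    |Real.log t| ≤ 3 * t ^ (-(1/3) : ℝ) := by
  obtain ⟨ht0, ht1⟩ := ht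
  have hpos : (0:ℝ) < t ^ (-(1/3) : ℝ) := Real.rpow_pos_of_pos ht0 _
  have h1 : Real.log (t ^ (-(1/3) : ℝ)) ≤ t ^ (-(1/3) : ℝ) - 1 :=
    Real.log_le_sub_one_of_pos hpos
  rw [Real.log_rpow ht0] at h1
  have hlt : Real.log t ≤ 0 := Real.log_nonpos ht0.le ht1
  rw [abs_of_nonpos hlt]
  nlinarith

lemma rpow_int : IntervalIntegrable (fun t : ℝ => 9 * t ^ (-(2/3) : ℝ)) volume 0 1 :=
  (intervalIntegrable_rpow' (by norm_num)).const_mul 9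

lemma bound_all {t : ℝ} (ht : t ∈ Set.Ioc (0:ℝ) 1) :
    |Real.log t| ≤ 9 * t ^ (-(2/3) : ℝ) ∧ (Real.log t)^2 ≤ 9 * t ^ (-(2/3) : ℝ) := by
  obtain ⟨ht0, ht1⟩ := ht
  have h1 := log_bound ⟨ht0, ht1⟩
  have h13 : t ^ (-(1/3) : ℝ) ≤ t ^ (-(2/3) : ℝ) :=
    Real.rpow_le_rpow_of_exponent_ge ht0 ht1 (by norm_num)
  have hmul : t ^ (-(1/3) : ℝ) * t ^ (-(1/3) : ℝ) = t ^ (-(2/3) : ℝ) := by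
    rw [← Real.rpow_add ht0]; norm_num
  have hp13 : (0:ℝ) < t ^ (-(1/3) : ℝ) := Real.rpow_pos_of_pos ht0 _
  have h1le : (1:ℝ) ≤ t ^ (-(1/3) : ℝ) := by
    have := Real.rpow_le_rpow_of_exponent_ge ht0 ht1 (show (-(1/3):ℝ) ≤ 0 by norm_num)
    simpa [Real.rpow_zero] using this
  constructor
  · nlinarith
  · have : (Real.log t)^2 = |Real.log t|^2 := (sq_abs _).symm
    rw [this]
    nlinarith [abs_nonneg (Real.log t)]

lemma integrable1 (j : ℕ) :
    IntervalIntegrable (fun t : ℝ => (1-t)^j * Real.log t) volume 0 1 := by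
  apply rpow_int.mono_fun'
  · exact (((measurable_const.sub measurable_id).pow_const j).mul
      Real.measurable_log).aestronglyMeasurable
  · rw [Filter.EventuallyLE, MeasureTheory.ae_restrict_iff' measurableSet_uIoc]
    refine Filter.Eventually.of_forall fun t ht => ?_
    rw [Set.uIoc_of_le (by norm_num : (0:ℝ) ≤ 1)] at ht
    have h := (bound_all ht).1
    have h1t : |1 - t| ≤ 1 := by
      rw [abs_le]; constructor <;> nlinarith [ht.1, ht.2]
    calc ‖(1-t)^j * Real.log t‖ = |1-t|^j * |Real.log t| := by
          rw [norm_mul, norm_pow]; rfl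
      _ ≤ 1 * |Real.log t| := by
          apply mul_le_mul_of_nonneg_right _ (abs_nonneg _)
          exact pow_le_one₀ (abs_nonneg _) h1t
      _ ≤ 9 * t ^ (-(2/3) : ℝ) := by rw [one_mul]; exact h

lemma integrable2 (n : ℕ) :
    IntervalIntegrable (fun t : ℝ => (1-t)^n * (Real.log t)^2) volume 0 1 := by
  apply rpow_int.mono_fun'
  · exact (((measurable_const.sub measurable_id).pow_const n).mul
      (Real.measurable_log.pow_const 2)).aestronglyMeasurable
  · rw [Filter.EventuallyLE, MeasureTheory.ae_restrict_iff' measurableSet_uIoc]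
    refine Filter.Eventually.of_forall fun t ht => ?_
    rw [Set.uIoc_of_le (by norm_num : (0:ℝ) ≤ 1)] at ht
    have h := (bound_all ht).2
    have h1t : |1 - t| ≤ 1 := by
      rw [abs_le]; constructor <;> nlinarith [ht.1, ht.2]
    calc ‖(1-t)^n * (Real.log t)^2‖ = |1-t|^n * |(Real.log t)^2| := by
          rw [norm_mul, norm_pow]; rfl
      _ ≤ 1 * |(Real.log t)^2| := by
          apply mul_le_mul_of_nonneg_right _ (abs_nonneg _)
          exact pow_le_one₀ (abs_nonneg _) h1t
      _ = (Real.log t)^2 := by rw [one_mul, abs_of_nonneg (sq_nonneg _)]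
      _ ≤ 9 * t ^ (-(2/3) : ℝ) := h

lemma geom_id (m : ℕ) (t : ℝ) :
    t * ∑ i ∈ Finset.range m, (1-t)^i = 1 - (1-t)^m := by
  have := geom_sum_mul (1-t) m
  linear_combination -this

lemma key1 (j : ℕ) :
    ∫ t in (0:ℝ)..1, (1-t)^j * Real.log t = -(genHarmonic 1 (j+1))/(j+1) := by
  set F : ℝ → ℝ := fun t =>
    ((1 - (1-t)^(j+1)) * Real.log t + ∑ i ∈ Finset.range (j+1), (1-t)^(i+1)/(i+1)) / (j+1)
    with hF
  have hcont : ContinuousOn F (Set.Icc (0:ℝ) 1) := by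
    have hFeq : F = fun t =>
        ((∑ i ∈ Finset.range (j+1), (1-t)^i) * (t * Real.log t)
          + ∑ i ∈ Finset.range (j+1), (1-t)^(i+1)/(i+1)) / (j+1) := by
      funext t
      simp only [hF]
      have hg : 1 - (1-t)^(j+1) = t * ∑ i ∈ Finset.range (j+1), (1-t)^i := (geom_id (j+1) t).symm
      rw [hg]; ring
    rw [hFeq]
    apply Continuous.continuousOn
    apply Continuous.div_const
    apply Continuous.add
    · exact (continuous_finset_sum _ fun i _ =>
        (continuous_const.sub continuous_id).pow i).mul Real.continuous_mul_log
    · exact continuous_finset_sum _ fun i _ =>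
        ((continuous_const.sub continuous_id).pow (i+1)).div_const _
  have hderiv : ∀ x ∈ Set.Ioo (0:ℝ) 1, HasDerivAt F ((1-x)^j * Real.log x) x := by
    intro x hx
    have hx0 : x ≠ 0 := ne_of_gt hx.1
    have hsub : HasDerivAt (fun t : ℝ => 1 - t) (-1) x := by
      simpa using (hasDerivAt_id x).const_sub 1
    have hpow : HasDerivAt (fun t : ℝ => (1-t)^(j+1)) ((j+1) * (1-x)^j * (-1)) x := by
      have := (hasDerivAt_pow (j+1) (1-x)).comp x hsub
      exact this.congr_deriv (by simp)
    have hA : HasDerivAt (fun t : ℝ => 1 - (1-t)^(j+1)) ((j+1) * (1-x)^j) x := by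
      have := hpow.const_sub 1
      exact this.congr_deriv (by ring)
    have hlog : HasDerivAt Real.log x⁻¹ x := Real.hasDerivAt_log hx0
    have hmul := hA.mul hlog
    have hsum : HasDerivAt (fun t : ℝ => ∑ i ∈ Finset.range (j+1), (1-t)^(i+1)/(i+1))
        (∑ i ∈ Finset.range (j+1), -(1-x)^i) x := by
      apply HasDerivAt.fun_sum
      intro i _
      have hpi : HasDerivAt (fun t : ℝ => (1-t)^(i+1)) ((i+1) * (1-x)^i * (-1)) x := by
        have := (hasDerivAt_pow (i+1) (1-x)).comp x hsub
        exact this.congr_deriv (by simp)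
      have := hpi.div_const ((i:ℝ)+1)
      refine this.congr_deriv ?_
      have hi : ((i:ℝ)+1) ≠ 0 := by positivity
      field_simp
    have htotal := (hmul.add hsum).div_const ((j:ℝ)+1)
    have hgeom : (1 - (1-x)^(j+1)) * x⁻¹ = ∑ i ∈ Finset.range (j+1), (1-x)^i := by
      rw [← geom_id (j+1) x]
      field_simp
    have hj : ((j:ℝ)+1) ≠ 0 := by positivity
    refine htotal.congr_deriv ?_
    rw [hgeom]
    have hneg : ∑ i ∈ Finset.range (j+1), -(1-x)^i
        = -∑ i ∈ Finset.range (j+1), (1-x)^i := by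
      rw [Finset.sum_neg_distrib]
    rw [hneg]
    field_simp
    ring
  have hFTC := intervalIntegral.integral_eq_sub_of_hasDeriv_right_of_le (by norm_num : (0:ℝ) ≤ 1)
    hcont (fun x hx => (hderiv x hx).hasDerivWithinAt) (integrable1 j)
  rw [hFTC]
  simp only [hF, genHarmonic, pow_one]
  norm_num [neg_div]

lemma key2 (n : ℕ) :
    ∫ t in (0:ℝ)..1, (1-t)^n * (Real.log t)^2
      = (2/(n+1)) * ∑ j ∈ Finset.range (n+1), genHarmonic 1 (j+1)/(j+1) := by
  set F : ℝ → ℝ := fun t => (1 - (1-t)^(n+1)) * (Real.log t)^2 / (n+1) with hF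
  set g : ℝ → ℝ := fun t => (1-t)^n * (Real.log t)^2
      + (2/(n+1)) * ∑ j ∈ Finset.range (n+1), (1-t)^j * Real.log t with hg
  have hgsum : IntervalIntegrable
      (fun t : ℝ => ∑ j ∈ Finset.range (n+1), (1-t)^j * Real.log t) volume 0 1 := by
    have := IntervalIntegrable.sum (μ := volume) (a := (0:ℝ)) (b := 1) (Finset.range (n+1))
      (f := fun j t => (1-t)^j * Real.log t) (fun i _ => integrable1 i)
    have heq : (∑ x ∈ Finset.range (n+1), fun t : ℝ => (1-t)^x * Real.log t)
        = fun t : ℝ => ∑ j ∈ Finset.range (n+1), (1-t)^j * Real.log t := by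
      funext t; simp [Finset.sum_apply]
    rwa [heq] at this
  have hcont : ContinuousOn F (Set.Icc (0:ℝ) 1) := by
    have hc : Continuous fun t : ℝ =>
        (∑ i ∈ Finset.range (n+1), (1-t)^i)
          * (2 * (Real.sqrt t * Real.log (Real.sqrt t)))^2 / (n+1) := by
      apply Continuous.div_const
      exact (continuous_finset_sum _ fun i _ => (continuous_const.sub continuous_id).pow i).mul
        ((continuous_const.mul (Real.continuous_mul_log.comp Real.continuous_sqrt)).pow 2)
    apply ContinuousOn.congr hc.continuousOn
    intro t ht
    have ht0 : (0:ℝ) ≤ t := ht.1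
    simp only [hF]
    have h1 : (2 * (Real.sqrt t * Real.log (Real.sqrt t)))^2 = t * (Real.log t)^2 := by
      rw [Real.log_sqrt ht0]
      have hs : Real.sqrt t ^ 2 = t := Real.sq_sqrt ht0
      calc (2 * (Real.sqrt t * (Real.log t / 2)))^2
          = Real.sqrt t ^ 2 * (Real.log t)^2 := by ring
        _ = t * (Real.log t)^2 := by rw [hs]
    rw [h1]
    have hgm : 1 - (1-t)^(n+1) = t * ∑ i ∈ Finset.range (n+1), (1-t)^i :=
      (geom_id (n+1) t).symm
    rw [hgm]; ring
  have hderiv : ∀ x ∈ Set.Ioo (0:ℝ) 1, HasDerivAt F (g x) x := by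
    intro x hx
    have hx0 : x ≠ 0 := ne_of_gt hx.1
    have hsub : HasDerivAt (fun t : ℝ => 1 - t) (-1) x := by
      simpa using (hasDerivAt_id x).const_sub 1
    have hpow : HasDerivAt (fun t : ℝ => (1-t)^(n+1)) ((n+1) * (1-x)^n * (-1)) x := by
      exact ((hasDerivAt_pow (n+1) (1-x)).comp x hsub).congr_deriv (by simp)
    have hA : HasDerivAt (fun t : ℝ => 1 - (1-t)^(n+1)) ((n+1) * (1-x)^n) x := by
      have := hpow.const_sub 1
      exact this.congr_deriv (by ring)
    have hlog2 := (Real.hasDerivAt_log hx0).pow 2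
    have htotal := (hA.mul hlog2).div_const ((n:ℝ)+1)
    have hgeom : (1 - (1-x)^(n+1)) * x⁻¹ = ∑ i ∈ Finset.range (n+1), (1-x)^i := by
      rw [← geom_id (n+1) x]; field_simp
    refine htotal.congr_deriv ?_
    simp only [hg]
    have hn : ((n:ℝ)+1) ≠ 0 := by positivity
    rw [← Finset.sum_mul, ← hgeom]
    field_simp
    simp only [Pi.pow_apply]; ring
  have hint : IntervalIntegrable g volume 0 1 := by
    rw [hg]
    exact (integrable2 n).add (hgsum.const_mul _)
  have hFTC := intervalIntegral.integral_eq_sub_of_hasDeriv_right_of_le (by norm_num : (0:ℝ) ≤ 1)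
    hcont (fun x hx => (hderiv x hx).hasDerivWithinAt) hint
  have hF10 : F 1 - F 0 = 0 := by simp [hF]
  rw [hF10] at hFTC
  have hsplit : ∫ t in (0:ℝ)..1, g t
      = (∫ t in (0:ℝ)..1, (1-t)^n * (Real.log t)^2)
        + (2/(n+1)) * ∑ j ∈ Finset.range (n+1), ∫ t in (0:ℝ)..1, (1-t)^j * Real.log t := by
    simp only [hg]
    rw [intervalIntegral.integral_add (integrable2 n) (hgsum.const_mul _),
      intervalIntegral.integral_const_mul,
      intervalIntegral.integral_finset_sum (fun i _ => integrable1 i)]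
  rw [hsplit] at hFTC
  have hK : ∑ j ∈ Finset.range (n+1), ∫ t in (0:ℝ)..1, (1-t)^j * Real.log t
      = -∑ j ∈ Finset.range (n+1), genHarmonic 1 (j+1)/((j:ℝ)+1) := by
    rw [← Finset.sum_neg_distrib]
    refine Finset.sum_congr rfl fun j _ => ?_
    rw [key1 j, neg_div]
  rw [hK, mul_neg] at hFTC
  linarith

lemma key3 (n : ℕ) :
    2 * ∑ j ∈ Finset.range n, genHarmonic 1 (j+1)/((j:ℝ)+1)
      = genHarmonic 2 n + (genHarmonic 1 n)^2 := by
  induction n with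
  | zero => simp [genHarmonic]
  | succ m ih =>
    rw [Finset.sum_range_succ]
    have h1 : genHarmonic 1 (m+1) = genHarmonic 1 m + 1/((m:ℝ)+1) := by
      simp [genHarmonic, Finset.sum_range_succ]
    have h2 : genHarmonic 2 (m+1) = genHarmonic 2 m + 1/((m:ℝ)+1)^2 := by
      simp [genHarmonic, Finset.sum_range_succ]
    have hm : ((m:ℝ)+1) ≠ 0 := by positivity
    rw [h1, h2, show (1:ℝ)/((m:ℝ)+1)^2 = (1/((m:ℝ)+1))^2 by rw [div_pow, one_pow]]
    linear_combination ih

theorem integral_log_sq (n : ℕ) (hn : 0 < n) :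
    (n : ℝ) * ∫ t in (0:ℝ)..1, (1 - t) ^ (n - 1) * (Real.log t) ^ 2 =
      genHarmonic 2 n + (genHarmonic 1 n) ^ 2 := by
  obtain ⟨m, rfl⟩ := Nat.exists_eq_add_of_lt hn
  simp only [Nat.zero_add] at *
  have hm : m + 1 - 1 = m := rfl
  rw [hm, key2 m, ← key3 (m+1)]
  have hne : ((m:ℝ)+1) ≠ 0 := by positivity
  push_cast
  field_simp
end

section
/- For all positive integers n and r, (-1)^{r+1} n ∫_0^1 (1-t)^{n-1} log^r t dt = r! ∑_{k=1}^n C(n,k) (-1)^k / k^r. -/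
open MeasureTheory Set Real

lemma exp_neg_image_Ioi : (fun u : ℝ => Real.exp (-u)) '' Set.Ioi 0 = Set.Ioo 0 1 := by
  ext x
  constructor
  · rintro ⟨u, hu, rfl⟩
    exact ⟨Real.exp_pos _, by
      have : (-u) < 0 := by linarith [Set.mem_Ioi.mp hu]
      simpa using Real.exp_lt_one_iff.mpr this⟩
  · rintro ⟨hx0, hx1⟩
    exact ⟨-Real.log x, by simpa using Real.log_neg hx0 hx1, by
      simp [Real.exp_log hx0]⟩

lemma deriv_aux (x : ℝ) :
    HasDerivWithinAt (fun u : ℝ => Real.exp (-u)) (-Real.exp (-x)) (Set.Ioi 0) x := by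
  simpa [Function.comp_def] using ((Real.hasDerivAt_exp (-x)).comp x (hasDerivAt_neg x)).hasDerivWithinAt

lemma inj_aux : Set.InjOn (fun u : ℝ => Real.exp (-u)) (Set.Ioi 0) := by
  intro a _ b _ h
  have := Real.exp_injective h
  linarith

lemma eq_aux (j r : ℕ) {u : ℝ} (hu : u ∈ Set.Ioi (0:ℝ)) :
    |(-Real.exp (-u))| • (Real.exp (-u) ^ j * Real.log (Real.exp (-u)) ^ r)
      = (-1 : ℝ) ^ r * (u ^ ((r : ℝ) + 1 - 1) * Real.exp (-(((j:ℝ)+1) * u))) := by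
  have hu0 : (0:ℝ) < u := hu
  simp only [smul_eq_mul, Real.log_exp, abs_neg, abs_of_pos (Real.exp_pos _)]
  rw [show (r:ℝ) + 1 - 1 = (r:ℝ) by ring, Real.rpow_natCast,
    show -(((j:ℝ)+1) * u) = ((j+1 : ℕ) : ℝ) * (-u) by push_cast; ring,
    Real.exp_nat_mul, neg_pow]
  ring

lemma integrableOn_aux (j r : ℕ) :
    IntegrableOn (fun t : ℝ => t ^ j * Real.log t ^ r) (Set.Ioo 0 1) := by
  rw [← exp_neg_image_Ioi,
    integrableOn_image_iff_integrableOn_abs_deriv_smul measurableSet_Ioi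
      (fun x _ => deriv_aux x) inj_aux]
  have : IntegrableOn (fun u : ℝ => u ^ (r : ℝ) * Real.exp (-((j : ℝ) + 1) * u ^ (1:ℝ)))
      (Set.Ioi 0) :=
    integrableOn_rpow_mul_exp_neg_mul_rpow
      (lt_of_lt_of_le neg_one_lt_zero (Nat.cast_nonneg r)) zero_lt_one (by positivity)
  apply MeasureTheory.IntegrableOn.congr_fun (this.const_mul ((-1 : ℝ) ^ r)) ?_
    measurableSet_Ioi
  intro u hu
  show (-1:ℝ)^r * (u ^ (r:ℝ) * Real.exp (-((j:ℝ)+1) * u ^ (1:ℝ)))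
    = |(-Real.exp (-u))| • (Real.exp (-u) ^ j * Real.log (Real.exp (-u)) ^ r)
  rw [eq_aux j r hu, show (r:ℝ) + 1 - 1 = (r:ℝ) by ring, Real.rpow_one]
  ring_nf

lemma integral_pow_mul_log_pow (j r : ℕ) :
    ∫ t in Set.Ioo (0:ℝ) 1, t ^ j * Real.log t ^ r
      = (-1 : ℝ) ^ r * r.factorial / ((j : ℝ) + 1) ^ (r + 1) := by
  rw [← exp_neg_image_Ioi,
    integral_image_eq_integral_abs_deriv_smul measurableSet_Ioi
      (fun x _ => deriv_aux x) inj_aux]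
  rw [setIntegral_congr_fun measurableSet_Ioi (fun u hu => eq_aux j r hu),
    integral_const_mul,
    Real.integral_rpow_mul_exp_neg_mul_Ioi
      (a := (r : ℝ) + 1) (r := (j : ℝ) + 1)
      (by positivity) (by positivity)]
  rw [show ((r:ℝ) + 1) = ((r:ℕ) : ℝ) + 1 by norm_num, Real.Gamma_nat_eq_factorial,
    show (((r:ℕ):ℝ) + 1) = ((r+1 : ℕ) : ℝ) by push_cast; ring, Real.rpow_natCast]
  have : ((j:ℝ) + 1) ≠ 0 := by positivity
  field_simp
  rw [one_div, inv_pow, inv_mul_cancel₀ (pow_ne_zero _ this)]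

theorem integral_log_pow_binomial (n r : ℕ) (hn : 0 < n) (hr : 0 < r) :
    (-1 : ℝ) ^ (r + 1) * (n : ℝ) * ∫ t in (0:ℝ)..1, (1 - t) ^ (n - 1) * (Real.log t) ^ r =
      (r.factorial : ℝ) * ∑ k ∈ Finset.Icc 1 n, (n.choose k : ℝ) * (-1) ^ k / (k : ℝ) ^ r := by
  have hn1 : n - 1 + 1 = n := Nat.succ_pred_eq_of_pos hn
  rw [intervalIntegral.integral_of_le zero_le_one,
    MeasureTheory.integral_Ioc_eq_integral_Ioo]
  have hexp : ∀ t : ℝ, (1 - t) ^ (n-1) * Real.log t ^ r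
      = ∑ j ∈ Finset.range n, ((n-1).choose j : ℝ) * (-1)^j * (t ^ j * Real.log t ^ r) := by
    intro t
    rw [show (1 : ℝ) - t = (-t) + 1 by ring, add_pow, ← hn1, Finset.sum_mul]
    apply Finset.sum_congr rfl
    intro j _
    rw [neg_pow]
    ring
  simp_rw [hexp]
  rw [MeasureTheory.integral_finset_sum _
    (fun j _ => ((integrableOn_aux j r).const_mul (((n-1).choose j : ℝ) * (-1)^j)))]
  simp_rw [MeasureTheory.integral_const_mul, integral_pow_mul_log_pow]
  rw [← Finset.Ico_add_one_right_eq_Icc, Finset.sum_Ico_eq_sum_range,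
    show n + 1 - 1 = n from rfl, Finset.mul_sum, Finset.mul_sum]
  apply Finset.sum_congr rfl
  intro j _
  rw [Nat.add_comm 1 j]
  have h1 : (n : ℝ) * ((n-1).choose j : ℝ) = (n.choose (j+1) : ℝ) * ((j:ℝ)+1) := by
    have := Nat.add_one_mul_choose_eq (n-1) j
    rw [hn1] at this
    exact_mod_cast this
  have hsgn : (-1:ℝ)^(r+1) * ((-1:ℝ)^j * (-1:ℝ)^r) = (-1:ℝ)^(j+1) := by
    rw [← pow_add, ← pow_add, show r+1+(j+r) = j+1+2*r by ring, pow_add, pow_mul]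
    norm_num
  have hj0 : ((j:ℝ)+1) ≠ 0 := by positivity
  push_cast
  rw [pow_succ ((j:ℝ)+1) r]
  have hsq : (-1:ℝ)^(r*2) = 1 := by rw [mul_comm, pow_mul, neg_one_sq, one_pow]
  field_simp
  linear_combination ((n:ℝ) * ((n-1).choose j : ℝ)) * hsgn + ((-1:ℝ)^(j+1)) * h1
end

section
/- For every positive integer n, (2n)!² / ((2n-1)!(2n+1)!) = ∑_{k=1}^n C(2n, 2k) · 2^{2k} B_{2k} / (2n-2k+1), where B_{2k} are the Bernoulli numbers. -/
open Finset Polynomial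

lemma bernoulli_comp_one_sub (n : ℕ) :
    (Polynomial.bernoulli n).comp (1 - X) = (-1 : ℚ[X]) ^ n * Polynomial.bernoulli n := by
  induction n with
  | zero => simp
  | succ n ih =>
    have hd : derivative ((Polynomial.bernoulli (n + 1)).comp (1 - X)
        - (-1 : ℚ[X]) ^ (n + 1) * Polynomial.bernoulli (n + 1)) = 0 := by
      rw [derivative_sub, derivative_comp_one_sub_X, Polynomial.derivative_bernoulli_add_one,
        derivative_mul]
      simp only [derivative_pow, derivative_neg, derivative_one,
        Polynomial.derivative_bernoulli_add_one, mul_comp, natCast_comp, add_comp, one_comp, ih]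
      ring
    have hc := Polynomial.eq_C_of_derivative_eq_zero hd
    have h0 : ((Polynomial.bernoulli (n + 1)).comp (1 - X)
        - (-1 : ℚ[X]) ^ (n + 1) * Polynomial.bernoulli (n + 1)).eval 0 = 0 := by
      simp only [eval_sub, eval_comp, eval_one, eval_X, sub_zero, eval_mul, eval_pow,
        eval_neg, Polynomial.bernoulli_eval_one, Polynomial.bernoulli_eval_zero]
      rw [_root_.bernoulli, ← mul_assoc, ← mul_pow]
      norm_num
    rw [hc, eval_C] at h0
    have h : (Polynomial.bernoulli (n + 1)).comp (1 - X)
        - (-1 : ℚ[X]) ^ (n + 1) * Polynomial.bernoulli (n + 1) = 0 := by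
      rw [hc, h0, map_zero]
    exact sub_eq_zero.mp h

lemma bernoulli_poly_eval_half (m : ℕ) (hm : Odd m) :
    (Polynomial.bernoulli m).eval (1 / 2 : ℚ) = 0 := by
  have h := congrArg (Polynomial.eval (1 / 2 : ℚ)) (bernoulli_comp_one_sub m)
  simp only [eval_comp, eval_sub, eval_one, eval_X, eval_mul, eval_pow, eval_neg] at h
  norm_num [hm.neg_one_pow] at h
  linarith

lemma sum_choose_two_pow_bernoulli (m : ℕ) (hm : Odd m) :
    ∑ i ∈ range (m + 1), (m.choose i : ℚ) * 2 ^ i * _root_.bernoulli i = 0 := by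
  have h := bernoulli_poly_eval_half m hm
  rw [Polynomial.bernoulli, eval_finset_sum] at h
  have h2 : (2 : ℚ) ^ m * ∑ i ∈ range (m + 1),
      (Polynomial.monomial (m - i) (_root_.bernoulli i * m.choose i)).eval (1 / 2 : ℚ) = 0 := by
    rw [h, mul_zero]
  rw [Finset.mul_sum] at h2
  rw [← h2]
  refine Finset.sum_congr rfl fun i hi => ?_
  rw [eval_monomial]
  rw [Finset.mem_range] at hi
  have hle : i ≤ m := Nat.lt_succ_iff.mp hi
  rw [div_pow, one_pow]
  field_simp
  rw [show (2:ℚ)^m = 2^i * 2^(m-i) by rw [← pow_add, Nat.add_sub_cancel' hle]]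
  ring

lemma sum_range_pair (f : ℕ → ℚ) (m : ℕ) :
    ∑ i ∈ range (2 * m), f i = ∑ k ∈ range m, (f (2 * k) + f (2 * k + 1)) := by
  induction m with
  | zero => simp
  | succ m ih =>
    rw [mul_add, mul_one, sum_range_succ, sum_range_succ, ih, sum_range_succ]
    ring

lemma bern_odd_zero (j : ℕ) (hj : 1 ≤ j) : _root_.bernoulli (2 * j + 1) = 0 := by
  rw [_root_.bernoulli, bernoulli'_eq_zero_of_odd ⟨j, by ring⟩ (by omega), mul_zero]

lemma key_sum (n : ℕ) (hn : 0 < n) :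
    ∑ k ∈ Icc 1 n, ((2 * n + 1).choose (2 * k) : ℚ) * 2 ^ (2 * k) * _root_.bernoulli (2 * k)
      = 2 * n := by
  have h := sum_choose_two_pow_bernoulli (2 * n + 1) ⟨n, by ring⟩
  have h2 : ∑ i ∈ range (2 * (n + 1)),
      ((2 * n + 1).choose i : ℚ) * 2 ^ i * _root_.bernoulli i = 0 := by
    rw [show 2 * (n + 1) = 2 * n + 1 + 1 by ring]; exact h
  rw [sum_range_pair, Finset.sum_add_distrib] at h2
  have hodd : ∑ k ∈ range (n + 1),
      ((2 * n + 1).choose (2 * k + 1) : ℚ) * 2 ^ (2 * k + 1) * _root_.bernoulli (2 * k + 1)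
      = -(2 * n + 1) := by
    rw [Finset.sum_eq_single 0]
    · simp [_root_.bernoulli_one]; ring
    · intro k _ hk
      rw [bern_odd_zero k (by omega), mul_zero]
    · simp
  have heven : ∑ k ∈ range (n + 1),
      ((2 * n + 1).choose (2 * k) : ℚ) * 2 ^ (2 * k) * _root_.bernoulli (2 * k)
      = 2 * n + 1 := by linarith
  rw [Finset.sum_range_succ'] at heven
  simp only [Nat.mul_zero, Nat.choose_zero_right, pow_zero, _root_.bernoulli_zero] at heven
  have hIcc : ∑ k ∈ Icc 1 n, ((2 * n + 1).choose (2 * k) : ℚ) * 2 ^ (2 * k)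
      * _root_.bernoulli (2 * k) = ∑ i ∈ range n,
      ((2 * n + 1).choose (2 * (i + 1)) : ℚ) * 2 ^ (2 * (i + 1))
      * _root_.bernoulli (2 * (i + 1)) := by
    rw [← Finset.Ico_add_one_right_eq_Icc, Finset.sum_Ico_eq_sum_range]
    simp only [Nat.add_sub_cancel, Nat.succ_sub_one]
    exact Finset.sum_congr rfl fun i _ => by rw [add_comm 1 i]
  rw [hIcc]
  push_cast at heven ⊢
  linarith

theorem bernoulli_even_sum (n : ℕ) (hn : 0 < n) :
    ((2 * n).factorial : ℝ) ^ 2 / (((2 * n - 1).factorial : ℝ) * ((2 * n + 1).factorial : ℝ)) =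
      ∑ k ∈ Finset.Icc 1 n,
        ((2 * n).choose (2 * k) : ℝ) * 2 ^ (2 * k) * (bernoulli (2 * k) : ℝ) /
          ((2 * n : ℝ) - 2 * k + 1) := by
  have keyQ := key_sum n hn
  have keyR : ∑ k ∈ Finset.Icc 1 n,
      ((2 * n + 1).choose (2 * k) : ℝ) * 2 ^ (2 * k) * ((bernoulli (2 * k) : ℚ) : ℝ)
      = 2 * n := by
    have := congrArg (fun q : ℚ => (q : ℝ)) keyQ
    push_cast at this
    exact this
  have hterm : ∀ k ∈ Finset.Icc 1 n,
      ((2 * n).choose (2 * k) : ℝ) * 2 ^ (2 * k) * (bernoulli (2 * k) : ℝ) /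
        ((2 * n : ℝ) - 2 * k + 1)
      = ((2 * n + 1).choose (2 * k) : ℝ) * 2 ^ (2 * k) * ((bernoulli (2 * k) : ℚ) : ℝ)
        / (2 * n + 1) := by
    intro k hk
    rw [Finset.mem_Icc] at hk
    have h2k : 2 * k ≤ 2 * n := by omega
    have hch : ((2 * n).choose (2 * k) : ℝ) * (2 * n + 1)
        = ((2 * n + 1).choose (2 * k) : ℝ) * ((2 * n : ℝ) - 2 * k + 1) := by
      have := Nat.choose_mul_succ_eq (2 * n) (2 * k)
      have hcast := congrArg (fun m : ℕ => (m : ℝ)) this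
      push_cast [Nat.cast_sub (by omega : 2 * k ≤ 2 * n + 1)] at hcast
      linarith [hcast]
    have hd : (2 * n : ℝ) - 2 * k + 1 ≠ 0 := by
      have : (2 * k : ℝ) ≤ 2 * n := by exact_mod_cast h2k
      linarith
    have hd2 : (2 * n : ℝ) + 1 ≠ 0 := by positivity
    rw [div_eq_div_iff hd (by positivity)]
    linear_combination (2 : ℝ) ^ (2 * k) * ((bernoulli (2 * k) : ℚ) : ℝ) * hch
  rw [Finset.sum_congr rfl hterm, ← Finset.sum_div, keyR]
  have h1 : (2 * n).factorial = 2 * n * (2 * n - 1).factorial := by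
    have e : 2 * n - 1 + 1 = 2 * n := by omega
    calc (2 * n).factorial = (2 * n - 1 + 1).factorial := by rw [e]
    _ = (2 * n - 1 + 1) * (2 * n - 1).factorial := Nat.factorial_succ _
    _ = 2 * n * (2 * n - 1).factorial := by rw [e]
  have h2 : (2 * n + 1).factorial = (2 * n + 1) * (2 * n).factorial := Nat.factorial_succ _
  have hf1 : ((2 * n - 1).factorial : ℝ) ≠ 0 := by positivity
  have hf2 : ((2 * n + 1) : ℝ) ≠ 0 := by positivity
  have hn' : (n : ℝ) ≠ 0 := Nat.cast_ne_zero.mpr (by omega)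
  rw [h2, h1]
  push_cast
  field_simp
end
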